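/- The conditional multivariate Rényi divergence satisfies the data processing inequality with respect to the main system: for conditional PMFs p⁰_{X|G},…,p^d_{X|G} and a conditional stochastic operator T mapping each p^k_{X|G} to q^k_{Y|G}(y|g) = ∑ₓ t(y|x,g) p^k_{X|G}(x|g), one has D_{α,β}(p⁰_{X|G},…,p^d_{X|G} | p_G) ≥ D_{α,β}(q⁰_{Y|G},…,q^d_{Y|G} | p_G) for every β ≥ 0. -/

import Mathlib

open Finset

private lemma gen_holder {ι κ : Type*} [Fintype ι] [Fintype κ] (w : κ → ℝ) (a : κ → ι → ℝ)
    (hw : ∀ k, 0 ≤ w k) (hw1 : ∑ k, w k = 1) (ha : ∀ k i, 0 ≤ a k i)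
    (hS : ∀ k, 0 < ∑ i, a k i) :
    ∑ i, ∏ k, (a k i) ^ (w k) ≤ ∏ k, (∑ i, a k i) ^ (w k) := by
  set S : κ → ℝ := fun k => ∑ i, a k i with hSdef
  have hkey : ∑ i, ∏ k, (a k i / S k) ^ w k ≤ 1 := by
    calc ∑ i, ∏ k, (a k i / S k) ^ w k
        ≤ ∑ i, ∑ k, w k * (a k i / S k) := by
          refine Finset.sum_le_sum fun i _ => ?_
          exact Real.geom_mean_le_arith_mean_weighted Finset.univ w (fun k => a k i / S k)
            (fun k _ => hw k) hw1 (fun k _ => div_nonneg (ha k i) (hS k).le)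
      _ = ∑ k, w k * (S k / S k) := by
          rw [Finset.sum_comm]
          refine Finset.sum_congr rfl fun k _ => ?_
          rw [← Finset.mul_sum, ← Finset.sum_div]
      _ = 1 := by
          rw [Finset.sum_congr rfl fun k _ => by rw [div_self (hS k).ne', mul_one]]
          exact hw1
  have hexp : ∀ i, ∏ k, (a k i) ^ (w k)
      = (∏ k, (S k) ^ (w k)) * ∏ k, (a k i / S k) ^ (w k) := by
    intro i
    rw [← Finset.prod_mul_distrib]
    refine Finset.prod_congr rfl fun k _ => ?_
    rw [← Real.mul_rpow (hS k).le (div_nonneg (ha k i) (hS k).le)]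
    congr 1
    rw [mul_comm, div_mul_cancel₀ _ (hS k).ne']
  calc ∑ i, ∏ k, (a k i) ^ (w k)
      = (∏ k, (S k) ^ (w k)) * ∑ i, ∏ k, (a k i / S k) ^ (w k) := by
        simp_rw [hexp]; rw [← Finset.mul_sum]
    _ ≤ (∏ k, (S k) ^ (w k)) * 1 := by
        apply mul_le_mul_of_nonneg_left hkey
        exact Finset.prod_nonneg fun k _ => Real.rpow_nonneg (hS k).le _
    _ = _ := mul_one _

/-- Data processing inequality for the conditional multivariate Rényi
divergence with respect to the main system: postprocessing each conditional
PMF `p k (·|g)` by a conditional stochastic operator `t(·|x,g)` does not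
increase `D_{α,β}(· | p_G)`, for every `β ≥ 0`. -/
theorem conditional_multivariate_renyi_dpi_main
    {X Y G : Type*} [Fintype X] [Fintype Y] [Fintype G]
    [Nonempty X] [Nonempty Y] [Nonempty G] (d : ℕ)
    (pG : G → ℝ) (p : Fin (d + 1) → X → G → ℝ)
    (α : Fin (d + 1) → ℝ) (αstar β : ℝ)
    (t : Y → X → G → ℝ)
    (hpG_pos : ∀ g, 0 < pG g) (hpG_sum : ∑ g, pG g = 1)
    (hp_pos : ∀ k x g, 0 < p k x g) (hp_sum : ∀ k g, ∑ x, p k x g = 1)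
    (ht_nonneg : ∀ y x g, 0 ≤ t y x g) (ht_sum : ∀ x g, ∑ y, t y x g = 1)
    (hq_pos : ∀ k y g, 0 < ∑ x, t y x g * p k x g)
    (hα_sum : ∑ k, α k = 1)
    (hα_cond : (∀ k, 0 ≤ α k) ∨
      (∃ l, 1 < α l ∧ ∀ k, k ≠ l → α k ≤ 0))
    (hαstar_ub : ∀ k, α k ≤ αstar) (hαstar_mem : ∃ k, α k = αstar)
    (hαstar_ne : αstar ≠ 1) (hβ : 0 ≤ β) :
    (β / (αstar - 1)) * Real.log
        (∑ g, pG g *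
          (∑ y, ∏ k, (∑ x, t y x g * p k x g) ^ (α k)) ^ (1 / β)) ≤
      (β / (αstar - 1)) * Real.log
        (∑ g, pG g * (∑ x, ∏ k, (p k x g) ^ (α k)) ^ (1 / β)) := by
  rcases eq_or_lt_of_le hβ with hβ0 | hβpos
  · simp [← hβ0]
  have hZp_pos : ∀ g : G, 0 < ∑ x, ∏ k, (p k x g) ^ (α k) := fun g =>
    Finset.sum_pos (fun x _ => Finset.prod_pos fun k _ => Real.rpow_pos_of_pos (hp_pos k x g) _)
      Finset.univ_nonempty
  have hZq_pos : ∀ g : G, 0 < ∑ y, ∏ k, (∑ x, t y x g * p k x g) ^ (α k) := fun g =>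
    Finset.sum_pos (fun y _ => Finset.prod_pos fun k _ => Real.rpow_pos_of_pos (hq_pos k y g) _)
      Finset.univ_nonempty
  have hstep1 : ∀ g : G, (∑ x, ∏ k, (p k x g) ^ (α k))
      = ∑ y, ∑ x, t y x g * ∏ k, (p k x g) ^ (α k) := by
    intro g
    rw [Finset.sum_comm]
    refine Finset.sum_congr rfl fun x _ => ?_
    rw [← Finset.sum_mul, ht_sum x g, one_mul]
  rcases hα_cond with hcase | ⟨l, hl1, hlneg⟩
  · -- all α nonneg, so αstar < 1
    have hαstar_lt : αstar < 1 := by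
      rcases lt_or_gt_of_ne hαstar_ne with h | h
      · exact h
      · exfalso
        obtain ⟨k0, hk0⟩ := hαstar_mem
        have h1 : α k0 ≤ ∑ k, α k :=
          Finset.single_le_sum (fun k _ => hcase k) (Finset.mem_univ k0)
        rw [hα_sum, hk0] at h1
        linarith
    have hZ : ∀ g : G, (∑ x, ∏ k, (p k x g) ^ (α k))
        ≤ ∑ y, ∏ k, (∑ x, t y x g * p k x g) ^ (α k) := by
      intro g
      rw [hstep1 g]
      refine Finset.sum_le_sum fun y _ => ?_
      refine le_trans (le_of_eq ?_)
        (gen_holder α (fun k x => t y x g * p k x g) hcase hα_sum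
          (fun k x => mul_nonneg (ht_nonneg y x g) (hp_pos k x g).le)
          (fun k => hq_pos k y g))
      refine Finset.sum_congr rfl fun x _ => ?_
      show t y x g * ∏ k, (p k x g) ^ (α k) = ∏ k, (t y x g * p k x g) ^ (α k)
      rcases eq_or_lt_of_le (ht_nonneg y x g) with h0 | hpos
      · obtain ⟨k0, hk0⟩ : ∃ k, 0 < α k := by
          by_contra hcon
          push_neg at hcon
          have hle : ∑ k, α k ≤ 0 := Finset.sum_nonpos fun k _ => hcon k
          rw [hα_sum] at hle; linarith
        rw [← h0, zero_mul, Finset.prod_eq_zero (Finset.mem_univ k0)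
          (by rw [zero_mul, Real.zero_rpow hk0.ne'])]
      · simp_rw [Real.mul_rpow hpos.le (hp_pos _ x g).le]
        rw [Finset.prod_mul_distrib, ← Real.rpow_sum_of_pos hpos, hα_sum, Real.rpow_one]
    have hlog : Real.log (∑ g, pG g * (∑ x, ∏ k, (p k x g) ^ (α k)) ^ (1/β))
        ≤ Real.log (∑ g, pG g * (∑ y, ∏ k, (∑ x, t y x g * p k x g) ^ (α k)) ^ (1/β)) := by
      apply Real.log_le_log
      · exact Finset.sum_pos (fun g _ => mul_pos (hpG_pos g)
          (Real.rpow_pos_of_pos (hZp_pos g) _)) Finset.univ_nonempty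
      · refine Finset.sum_le_sum fun g _ => ?_
        exact mul_le_mul_of_nonneg_left
          (Real.rpow_le_rpow (hZp_pos g).le (hZ g) (by positivity)) (hpG_pos g).le
    have hc : β / (αstar - 1) ≤ 0 :=
      div_nonpos_of_nonneg_of_nonpos hβ (by linarith)
    exact mul_le_mul_of_nonpos_left hlog hc
  · -- one α l > 1, so αstar > 1
    have hαl_pos : (0:ℝ) < α l := lt_trans one_pos hl1
    have hαstar_gt : 1 < αstar := lt_of_lt_of_le hl1 (hαstar_ub l)
    have hsum_erase : ∑ k ∈ Finset.univ.erase l, α k = 1 - α l := by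
      have h := Finset.add_sum_erase Finset.univ α (Finset.mem_univ l)
      rw [hα_sum] at h
      linarith
    have hZ : ∀ g : G, (∑ y, ∏ k, (∑ x, t y x g * p k x g) ^ (α k))
        ≤ ∑ x, ∏ k, (p k x g) ^ (α k) := by
      intro g
      rw [hstep1 g]
      refine Finset.sum_le_sum fun y _ => ?_
      obtain ⟨x0, hx0⟩ : ∃ x : X, 0 < t y x g := by
        by_contra hcon
        push_neg at hcon
        have hzero : ∀ x : X, t y x g = 0 := fun x => le_antisymm (hcon x) (ht_nonneg y x g)
        have hq := hq_pos l y g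
        rw [Finset.sum_eq_zero (fun x _ => by rw [hzero x, zero_mul])] at hq
        exact lt_irrefl 0 hq
      have hR_pos : 0 < ∑ x, t y x g * ∏ k, (p k x g) ^ (α k) := by
        refine Finset.sum_pos' (fun x _ => mul_nonneg (ht_nonneg y x g)
          (Finset.prod_nonneg fun k _ => Real.rpow_nonneg (hp_pos k x g).le _))
          ⟨x0, Finset.mem_univ x0, ?_⟩
        exact mul_pos hx0 (Finset.prod_pos fun k _ => Real.rpow_pos_of_pos (hp_pos k x0 g) _)
      set w : Fin (d+1) → ℝ := fun k => if k = l then 1/α l else -α k / α l with hwdef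
      set a : Fin (d+1) → X → ℝ := fun k x =>
        if k = l then t y x g * ∏ m, (p m x g) ^ (α m) else t y x g * p k x g with hadef
      have hwl : w l = 1 / α l := if_pos rfl
      have hw_erase : ∀ k ∈ Finset.univ.erase l, w k = -α k / α l := fun k hk =>
        if_neg (Finset.ne_of_mem_erase hk)
      have hal : ∀ x, a l x = t y x g * ∏ m, (p m x g) ^ (α m) := fun x => if_pos rfl
      have ha_erase : ∀ x, ∀ k ∈ Finset.univ.erase l, a k x = t y x g * p k x g :=
        fun x k hk => if_neg (Finset.ne_of_mem_erase hk)
      have hw_nonneg : ∀ k, 0 ≤ w k := by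
        intro k
        by_cases hk : k = l
        · rw [hk, hwl]; positivity
        · rw [show w k = -α k / α l from if_neg hk]
          exact div_nonneg (neg_nonneg.mpr (hlneg k hk)) hαl_pos.le
      have hw_sum : ∑ k, w k = 1 := by
        rw [← Finset.add_sum_erase _ w (Finset.mem_univ l), hwl,
          Finset.sum_congr rfl hw_erase]
        simp_rw [neg_div]
        rw [Finset.sum_neg_distrib, ← Finset.sum_div, hsum_erase]
        field_simp
        ring
      have ha_nonneg : ∀ k x, 0 ≤ a k x := by
        intro k x
        by_cases hk : k = l
        · rw [hk, hal]
          exact mul_nonneg (ht_nonneg y x g)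
            (Finset.prod_nonneg fun m _ => Real.rpow_nonneg (hp_pos m x g).le _)
        · rw [show a k x = t y x g * p k x g from if_neg hk]
          exact mul_nonneg (ht_nonneg y x g) (hp_pos k x g).le
      have hS_pos : ∀ k, 0 < ∑ x, a k x := by
        intro k
        by_cases hk : k = l
        · subst hk
          simp_rw [hal]
          exact hR_pos
        · simp_rw [show ∀ x, a k x = t y x g * p k x g from fun x => if_neg hk]
          exact hq_pos k y g
      have hid : ∀ x, ∏ k, (a k x) ^ (w k) = t y x g * p l x g := by
        intro x
        rcases eq_or_lt_of_le (ht_nonneg y x g) with h0 | hpos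
        · rw [Finset.prod_eq_zero (Finset.mem_univ l)
            (by rw [hal, hwl, ← h0, zero_mul, Real.zero_rpow (one_div_ne_zero hαl_pos.ne')]),
            ← h0, zero_mul]
        · rw [← Finset.mul_prod_erase _ _ (Finset.mem_univ l)]
          have h1 : (a l x) ^ (w l) = t y x g ^ (1/α l) * ∏ m, (p m x g) ^ (α m * (1/α l)) := by
            rw [hal, hwl,
              Real.mul_rpow hpos.le
                (Finset.prod_nonneg fun m _ => Real.rpow_nonneg (hp_pos m x g).le _)]
            congr 1
            rw [← Real.finset_prod_rpow _ _ (fun m _ => Real.rpow_nonneg (hp_pos m x g).le _)]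
            exact Finset.prod_congr rfl fun m _ => (Real.rpow_mul (hp_pos m x g).le _ _).symm
          have h2 : ∏ k ∈ Finset.univ.erase l, (a k x) ^ (w k)
              = (∏ k ∈ Finset.univ.erase l, t y x g ^ (w k)) *
                ∏ k ∈ Finset.univ.erase l, (p k x g) ^ (w k) := by
            rw [← Finset.prod_mul_distrib]
            refine Finset.prod_congr rfl fun k hk => ?_
            rw [ha_erase x k hk]
            exact Real.mul_rpow hpos.le (hp_pos k x g).le
          have ht_part : t y x g ^ (1/α l) * ∏ k ∈ Finset.univ.erase l, t y x g ^ (w k)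
              = t y x g := by
            rw [← hwl, Finset.mul_prod_erase _ (fun k => t y x g ^ (w k)) (Finset.mem_univ l),
              ← Real.rpow_sum_of_pos hpos, hw_sum, Real.rpow_one]
          have hp_part : (∏ m, (p m x g) ^ (α m * (1/α l))) *
              ∏ k ∈ Finset.univ.erase l, (p k x g) ^ (w k) = p l x g := by
            rw [← Finset.mul_prod_erase _ (fun m => (p m x g) ^ (α m * (1/α l)))
              (Finset.mem_univ l), mul_assoc, ← Finset.prod_mul_distrib]
            have hone : ∀ k ∈ Finset.univ.erase l,
                (p k x g) ^ (α k * (1/α l)) * (p k x g) ^ (w k) = 1 := by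
              intro k hk
              rw [hw_erase k hk, ← Real.rpow_add (hp_pos k x g),
                show α k * (1/α l) + -α k / α l = 0 by field_simp; ring, Real.rpow_zero]
            rw [Finset.prod_congr rfl hone, Finset.prod_const_one, mul_one,
              mul_one_div, div_self hαl_pos.ne', Real.rpow_one]
          rw [h1, h2]
          calc (t y x g ^ (1/α l) * ∏ m, (p m x g) ^ (α m * (1/α l))) *
                ((∏ k ∈ Finset.univ.erase l, t y x g ^ (w k)) *
                 ∏ k ∈ Finset.univ.erase l, (p k x g) ^ (w k))
              = (t y x g ^ (1/α l) * ∏ k ∈ Finset.univ.erase l, t y x g ^ (w k)) *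
                ((∏ m, (p m x g) ^ (α m * (1/α l))) *
                 ∏ k ∈ Finset.univ.erase l, (p k x g) ^ (w k)) := by ring
            _ = t y x g * p l x g := by rw [ht_part, hp_part]
      have hh := gen_holder w a hw_nonneg hw_sum ha_nonneg hS_pos
      rw [Finset.sum_congr rfl (fun x _ => hid x)] at hh
      have hRHS : ∏ k, (∑ x, a k x) ^ (w k)
          = (∑ x, t y x g * ∏ k, (p k x g) ^ (α k)) ^ (1/α l) *
            ∏ k ∈ Finset.univ.erase l, (∑ x, t y x g * p k x g) ^ (-α k / α l) := by
        rw [← Finset.mul_prod_erase _ _ (Finset.mem_univ l)]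
        congr 1
        · rw [hwl]
          congr 1
          exact Finset.sum_congr rfl fun x _ => hal x
        · refine Finset.prod_congr rfl fun k hk => ?_
          rw [hw_erase k hk]
          congr 1
          exact Finset.sum_congr rfl fun x _ => ha_erase x k hk
      rw [hRHS] at hh
      have h3 := Real.rpow_le_rpow (hq_pos l y g).le hh hαl_pos.le
      rw [Real.mul_rpow (Real.rpow_nonneg hR_pos.le _)
          (Finset.prod_nonneg fun k _ => Real.rpow_nonneg (hq_pos k y g).le _),
        ← Real.rpow_mul hR_pos.le, one_div_mul_cancel hαl_pos.ne', Real.rpow_one] at h3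
      have h4 : (∏ k ∈ Finset.univ.erase l, (∑ x, t y x g * p k x g) ^ (-α k / α l)) ^ (α l)
          = ∏ k ∈ Finset.univ.erase l, (∑ x, t y x g * p k x g) ^ (-α k) := by
        rw [← Real.finset_prod_rpow _ _
          (fun k _ => Real.rpow_nonneg (hq_pos k y g).le _)]
        refine Finset.prod_congr rfl fun k hk => ?_
        rw [← Real.rpow_mul (hq_pos k y g).le, div_mul_cancel₀ _ hαl_pos.ne']
      rw [h4] at h3
      rw [← Finset.mul_prod_erase _ _ (Finset.mem_univ l)]
      have hE_pos : 0 < ∏ k ∈ Finset.univ.erase l, (∑ x, t y x g * p k x g) ^ (α k) :=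
        Finset.prod_pos fun k _ => Real.rpow_pos_of_pos (hq_pos k y g) _
      calc (∑ x, t y x g * p l x g) ^ (α l) *
            ∏ k ∈ Finset.univ.erase l, (∑ x, t y x g * p k x g) ^ (α k)
          ≤ ((∑ x, t y x g * ∏ k, (p k x g) ^ (α k)) *
              ∏ k ∈ Finset.univ.erase l, (∑ x, t y x g * p k x g) ^ (-α k)) *
            ∏ k ∈ Finset.univ.erase l, (∑ x, t y x g * p k x g) ^ (α k) :=
            mul_le_mul_of_nonneg_right h3 hE_pos.le
        _ = (∑ x, t y x g * ∏ k, (p k x g) ^ (α k)) *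
            ∏ k ∈ Finset.univ.erase l,
              ((∑ x, t y x g * p k x g) ^ (-α k) * (∑ x, t y x g * p k x g) ^ (α k)) := by
            rw [mul_assoc, ← Finset.prod_mul_distrib]
        _ = ∑ x, t y x g * ∏ k, (p k x g) ^ (α k) := by
            rw [Finset.prod_congr rfl (fun k hk => by
              rw [← Real.rpow_add (hq_pos k y g), neg_add_cancel, Real.rpow_zero]),
              Finset.prod_const_one, mul_one]
    have hlog : Real.log (∑ g, pG g * (∑ y, ∏ k, (∑ x, t y x g * p k x g) ^ (α k)) ^ (1/β))
        ≤ Real.log (∑ g, pG g * (∑ x, ∏ k, (p k x g) ^ (α k)) ^ (1/β)) := by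
      apply Real.log_le_log
      · exact Finset.sum_pos (fun g _ => mul_pos (hpG_pos g)
          (Real.rpow_pos_of_pos (hZq_pos g) _)) Finset.univ_nonempty
      · refine Finset.sum_le_sum fun g _ => ?_
        exact mul_le_mul_of_nonneg_left
          (Real.rpow_le_rpow (hZq_pos g).le (hZ g) (by positivity)) (hpG_pos g).le
    have hc : 0 ≤ β / (αstar - 1) := div_nonneg hβ (by linarith)
    exact mul_le_mul_of_nonneg_left hlog hc
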